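/- arXiv:2510.04478 — 2 statements merged into one kernel-verified Lean document; each statement's English description precedes it below -/
import Mathlib

section
/- Under ‖A(t)‖ ≤ λ_A and ‖B(t)‖ ≤ λ_B for all t ∈ [t₀, t₀+σ], the controllability Gramian satisfies the upper bound W_{A,B}(t₀,t₁) ⪯ (λ_B²/(2λ_A))(exp(2λ_A σ) − 1) I for every t₁ ∈ [t₀, t₀+σ]. -/
open Matrix Set
open scoped Matrix.Norms.L2Operator

lemma aux_norm_one_le {n : ℕ} : ‖(1 : Matrix (Fin n) (Fin n) ℝ)‖ ≤ 1 := by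
  rw [Matrix.cstar_norm_def, _root_.map_one]
  exact ContinuousLinearMap.norm_id_le

lemma aux_dot_self_nonneg {k : ℕ} (v : Fin k → ℝ) : 0 ≤ v ⬝ᵥ v :=
  Finset.sum_nonneg fun i _ => mul_self_nonneg _

lemma aux_psd_of_form {n : ℕ} {W : Matrix (Fin n) (Fin n) ℝ} {c : ℝ}
    (hH : Wᵀ = W) (h : ∀ v : Fin n → ℝ, v ⬝ᵥ W *ᵥ v ≤ c * (v ⬝ᵥ v)) :
    (c • (1 : Matrix (Fin n) (Fin n) ℝ) - W).PosSemidef := by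
  rw [Matrix.posSemidef_iff_dotProduct_mulVec]
  constructor
  · show _ = _
    rw [Matrix.conjTranspose_sub, Matrix.conjTranspose_smul, Matrix.conjTranspose_one,
      star_trivial, show Wᴴ = Wᵀ from rfl, hH]
  · intro x
    simp only [star_trivial, Matrix.sub_mulVec, Matrix.smul_mulVec, Matrix.one_mulVec,
      dotProduct_sub, dotProduct_smul, smul_eq_mul]
    linarith [h x]

lemma aux_dot_sq {k : ℕ} (u : Fin k → ℝ) :
    u ⬝ᵥ u = ‖(EuclideanSpace.equiv (Fin k) ℝ).symm u‖ ^ 2 := by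
  rw [EuclideanSpace.norm_eq, Real.sq_sqrt (Finset.sum_nonneg fun i _ => sq_nonneg _)]
  simp [dotProduct, Real.norm_eq_abs, sq_abs, sq]

lemma aux_quad_eq {n m : ℕ} (P : Matrix (Fin n) (Fin m) ℝ) (v : Fin n → ℝ) :
    v ⬝ᵥ (P * Pᵀ) *ᵥ v = (Pᵀ *ᵥ v) ⬝ᵥ (Pᵀ *ᵥ v) := by
  rw [← Matrix.mulVec_mulVec, Matrix.dotProduct_mulVec, ← Matrix.mulVec_transpose]

lemma aux_quad_bound {n m : ℕ} (P : Matrix (Fin n) (Fin m) ℝ) (v : Fin n → ℝ) :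
    v ⬝ᵥ (P * Pᵀ) *ᵥ v ≤ ‖P‖ ^ 2 * (v ⬝ᵥ v) := by
  rw [aux_quad_eq, aux_dot_sq, aux_dot_sq]
  have h1 : Pᴴ = Pᵀ := by ext i j; simp [Matrix.conjTranspose_apply]
  have h2 := Matrix.l2_opNorm_mulVec Pᵀ ((EuclideanSpace.equiv (Fin n) ℝ).symm v)
  rw [← h1, Matrix.l2_opNorm_conjTranspose] at h2
  calc ‖(EuclideanSpace.equiv (Fin m) ℝ).symm (Pᵀ *ᵥ v)‖ ^ 2
      ≤ (‖P‖ * ‖(EuclideanSpace.equiv (Fin n) ℝ).symm v‖) ^ 2 := by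
        apply pow_le_pow_left₀ (norm_nonneg _) h2
    _ = ‖P‖ ^ 2 * ‖(EuclideanSpace.equiv (Fin n) ℝ).symm v‖ ^ 2 := by ring

lemma aux_phi_bound {n : ℕ} (t₀ σ lamA : ℝ)
    (A : ℝ → Matrix (Fin n) (Fin n) ℝ)
    (hAb : ∀ t ∈ Icc t₀ (t₀ + σ), ‖A t‖ ≤ lamA)
    (Φ : ℝ → ℝ → Matrix (Fin n) (Fin n) ℝ)
    (hΦderiv : ∀ s ∈ Icc t₀ (t₀ + σ), ∀ t ∈ Icc t₀ (t₀ + σ),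
      HasDerivAt (fun r => Φ r s) (A t * Φ t s) t)
    (hΦinit : ∀ s ∈ Icc t₀ (t₀ + σ), Φ s s = 1) :
    ∀ s ∈ Icc t₀ (t₀ + σ), ‖Φ t₀ s‖ ≤ Real.exp (lamA * (s - t₀)) := by
  intro s hs
  set g : ℝ → Matrix (Fin n) (Fin n) ℝ := fun r => Φ (s - r) s with hg
  have hmem : ∀ r ∈ Icc (0:ℝ) (s - t₀), s - r ∈ Icc t₀ (t₀ + σ) := by
    intro r hr
    exact ⟨by linarith [hr.2], by linarith [hr.1, hs.2]⟩
  have hderiv : ∀ r ∈ Icc (0:ℝ) (s - t₀),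
      HasDerivAt g ((-1 : ℝ) • (A (s - r) * Φ (s - r) s)) r := by
    intro r hr
    exact (hΦderiv s hs (s - r) (hmem r hr)).scomp r ((hasDerivAt_id r).const_sub s)
  have key := norm_le_gronwallBound_of_norm_deriv_right_le
    (f := g) (f' := fun r => (-1 : ℝ) • (A (s - r) * Φ (s - r) s))
    (δ := 1) (K := lamA) (ε := 0) (a := 0) (b := s - t₀)
    (fun r hr => ((hderiv r hr).continuousAt).continuousWithinAt)
    (fun r hr => (hderiv r (Ico_subset_Icc_self hr)).hasDerivWithinAt)
    (by simp only [hg, sub_zero, hΦinit s hs]; exact aux_norm_one_le)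
    (by
      intro r hr
      rw [norm_smul, norm_neg, norm_one, one_mul, add_zero]
      calc ‖A (s - r) * Φ (s - r) s‖ ≤ ‖A (s - r)‖ * ‖Φ (s - r) s‖ := norm_mul_le _ _
        _ ≤ lamA * ‖g r‖ :=
            mul_le_mul_of_nonneg_right (hAb _ (hmem r (Ico_subset_Icc_self hr)))
              (norm_nonneg _))
  have h := key (s - t₀) ⟨by linarith [hs.1], le_refl _⟩
  rw [hg] at h
  simp only [sub_sub_cancel, sub_zero, gronwallBound_ε0, one_mul] at h
  exact h

/-- Controllability Gramian. -/
noncomputable def gram {n m : ℕ} (Φ : ℝ → ℝ → Matrix (Fin n) (Fin n) ℝ)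
    (B : ℝ → Matrix (Fin n) (Fin m) ℝ) (t₀ t₁ : ℝ) : Matrix (Fin n) (Fin n) ℝ :=
  ∫ s in t₀..t₁, Φ t₀ s * B s * (B s)ᵀ * (Φ t₀ s)ᵀ

/-- Under ‖A(t)‖ ≤ λ_A and ‖B(t)‖ ≤ λ_B on [t₀, t₀+σ],
W_{A,B}(t₀,t₁) ⪯ (λ_B²/(2λ_A))(exp(2λ_A σ) − 1) I for every t₁ ∈ [t₀, t₀+σ]. -/
theorem stmt_5 {n m : ℕ} (t₀ σ lamA lamB : ℝ) (hσ : 0 ≤ σ) (hlamA : 0 < lamA)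
    (A : ℝ → Matrix (Fin n) (Fin n) ℝ) (B : ℝ → Matrix (Fin n) (Fin m) ℝ)
    (hAc : ContinuousOn A (Icc t₀ (t₀ + σ))) (hBc : ContinuousOn B (Icc t₀ (t₀ + σ)))
    (hAb : ∀ t ∈ Icc t₀ (t₀ + σ), ‖A t‖ ≤ lamA)
    (hBb : ∀ t ∈ Icc t₀ (t₀ + σ), ‖B t‖ ≤ lamB)
    (Φ : ℝ → ℝ → Matrix (Fin n) (Fin n) ℝ)
    (hΦderiv : ∀ s ∈ Icc t₀ (t₀ + σ), ∀ t ∈ Icc t₀ (t₀ + σ),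
      HasDerivAt (fun r => Φ r s) (A t * Φ t s) t)
    (hΦinit : ∀ s ∈ Icc t₀ (t₀ + σ), Φ s s = 1) :
    ∀ t₁ ∈ Icc t₀ (t₀ + σ),
      ((lamB ^ 2 / (2 * lamA) * (Real.exp (2 * lamA * σ) - 1)) •
          (1 : Matrix (Fin n) (Fin n) ℝ) - gram Φ B t₀ t₁).PosSemidef := by
  intro t₁ ht₁
  have ht01 : t₀ ≤ t₁ := ht₁.1
  have hsub : Icc t₀ t₁ ⊆ Icc t₀ (t₀ + σ) := Icc_subset_Icc (le_refl _) ht₁.2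
  set c : ℝ := lamB ^ 2 / (2 * lamA) * (Real.exp (2 * lamA * σ) - 1) with hc
  have hexpσ : (1:ℝ) ≤ Real.exp (2 * lamA * σ) := by
    rw [← Real.exp_zero]
    exact Real.exp_le_exp.mpr (by positivity)
  have hc0 : 0 ≤ c :=
    mul_nonneg (div_nonneg (sq_nonneg _) (by linarith)) (by linarith)
  set f : ℝ → Matrix (Fin n) (Fin n) ℝ :=
    fun s => Φ t₀ s * B s * (B s)ᵀ * (Φ t₀ s)ᵀ with hf
  have hgram : gram Φ B t₀ t₁ = ∫ s in t₀..t₁, f s := rfl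
  by_cases hInt : IntervalIntegrable f MeasureTheory.volume t₀ t₁
  · -- integrable case
    -- symmetry
    have hPP : ∀ s, f s = (Φ t₀ s * B s) * (Φ t₀ s * B s)ᵀ := by
      intro s
      rw [hf]
      rw [Matrix.transpose_mul, ← Matrix.mul_assoc]
    have hfsymm : ∀ s, (f s)ᵀ = f s := by
      intro s
      rw [hPP s, Matrix.transpose_mul, Matrix.transpose_transpose]
    have hT : (gram Φ B t₀ t₁)ᵀ = gram Φ B t₀ t₁ := by
      set T : Matrix (Fin n) (Fin n) ℝ →L[ℝ] Matrix (Fin n) (Fin n) ℝ :=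
        LinearMap.toContinuousLinearMap
          ((Matrix.transposeLinearEquiv (Fin n) (Fin n) ℝ ℝ).toLinearMap) with hTdef
      have h1 : (∫ s in t₀..t₁, T (f s)) = T (∫ s in t₀..t₁, f s) :=
        T.intervalIntegral_comp_comm hInt
      have hTapp : ∀ M : Matrix (Fin n) (Fin n) ℝ, T M = Mᵀ := fun M => rfl
      rw [hgram, ← hTapp, ← h1]
      simp only [hTapp, hfsymm]
    apply aux_psd_of_form hT
    intro v
    -- quadratic form as integral
    set Lv : Matrix (Fin n) (Fin n) ℝ →L[ℝ] ℝ :=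
      LinearMap.toContinuousLinearMap
        { toFun := fun M => v ⬝ᵥ M *ᵥ v
          map_add' := by
            intro M N
            simp [Matrix.add_mulVec, dotProduct_add]
          map_smul' := by
            intro r M
            simp [Matrix.smul_mulVec, dotProduct_smul] } with hLv
    have hLapp : ∀ M, Lv M = v ⬝ᵥ M *ᵥ v := fun M => rfl
    have hform : v ⬝ᵥ (gram Φ B t₀ t₁) *ᵥ v = ∫ s in t₀..t₁, v ⬝ᵥ f s *ᵥ v := by
      rw [hgram, ← hLapp, ← Lv.intervalIntegral_comp_comm hInt]
      simp only [hLapp]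
    rw [hform]
    have hq_int : IntervalIntegrable (fun s => v ⬝ᵥ f s *ᵥ v) MeasureTheory.volume t₀ t₁ :=
      ⟨Lv.integrable_comp hInt.1, Lv.integrable_comp hInt.2⟩
    -- pointwise bound
    have hΦb := aux_phi_bound t₀ σ lamA A hAb Φ hΦderiv hΦinit
    set gbd : ℝ → ℝ := fun s => lamB ^ 2 * (v ⬝ᵥ v) * Real.exp (2 * lamA * (s - t₀)) with hgbd
    have hpt : ∀ s ∈ Icc t₀ t₁, v ⬝ᵥ f s *ᵥ v ≤ gbd s := by
      intro s hs
      have hs' := hsub hs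
      rw [hPP s]
      refine le_trans (aux_quad_bound _ v) ?_
      have hnorm : ‖Φ t₀ s * B s‖ ≤ Real.exp (lamA * (s - t₀)) * lamB := by
        refine le_trans (Matrix.l2_opNorm_mul _ _) ?_
        exact mul_le_mul (hΦb s hs') (hBb s hs') (norm_nonneg _) (Real.exp_nonneg _)
      have hsq : ‖Φ t₀ s * B s‖ ^ 2 ≤ (Real.exp (lamA * (s - t₀)) * lamB) ^ 2 :=
        pow_le_pow_left₀ (norm_nonneg _) hnorm 2
      have hex : (Real.exp (lamA * (s - t₀)) * lamB) ^ 2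
          = lamB ^ 2 * Real.exp (2 * lamA * (s - t₀)) := by
        rw [mul_pow, ← Real.exp_nat_mul]
        ring_nf
      have hvv := aux_dot_self_nonneg v
      rw [hgbd]
      calc ‖Φ t₀ s * B s‖ ^ 2 * (v ⬝ᵥ v)
          ≤ (Real.exp (lamA * (s - t₀)) * lamB) ^ 2 * (v ⬝ᵥ v) :=
            mul_le_mul_of_nonneg_right hsq hvv
        _ = lamB ^ 2 * (v ⬝ᵥ v) * Real.exp (2 * lamA * (s - t₀)) := by rw [hex]; ring
    have hg_int : IntervalIntegrable gbd MeasureTheory.volume t₀ t₁ := by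
      apply Continuous.intervalIntegrable
      fun_prop
    have hmono := intervalIntegral.integral_mono_on ht01 hq_int hg_int hpt
    refine le_trans hmono ?_
    -- compute ∫ gbd
    have hderivF : ∀ s : ℝ, HasDerivAt (fun u => Real.exp (2 * lamA * (u - t₀)) / (2 * lamA))
        (Real.exp (2 * lamA * (s - t₀))) s := by
      intro s
      have h1 : HasDerivAt (fun u : ℝ => 2 * lamA * (u - t₀)) (2 * lamA) s := by
        simpa using ((hasDerivAt_id s).sub_const t₀).const_mul (2 * lamA)
      have h2 := (h1.exp).div_const (2 * lamA)
      have hne : 2 * lamA ≠ 0 := by positivity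
      simpa [mul_div_assoc, mul_div_cancel_right₀ _ hne] using h2
    have hint_exp : (∫ s in t₀..t₁, Real.exp (2 * lamA * (s - t₀)))
        = Real.exp (2 * lamA * (t₁ - t₀)) / (2 * lamA) - 1 / (2 * lamA) := by
      rw [intervalIntegral.integral_eq_sub_of_hasDerivAt (fun s _ => hderivF s)
        (by apply Continuous.intervalIntegrable; fun_prop)]
      simp
    have hcalc : (∫ s in t₀..t₁, gbd s)
        = lamB ^ 2 * (v ⬝ᵥ v) *
            (Real.exp (2 * lamA * (t₁ - t₀)) / (2 * lamA) - 1 / (2 * lamA)) := by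
      rw [hgbd]
      rw [intervalIntegral.integral_const_mul, hint_exp]
    rw [hcalc]
    have hvv := aux_dot_self_nonneg v
    have hexp1 : Real.exp (2 * lamA * (t₁ - t₀)) ≤ Real.exp (2 * lamA * σ) := by
      apply Real.exp_le_exp.mpr
      have : t₁ - t₀ ≤ σ := by linarith [ht₁.2]
      nlinarith
    rw [hc]
    have h2A : (0:ℝ) < 2 * lamA := by linarith
    have e1 : lamB ^ 2 * (v ⬝ᵥ v) *
        (Real.exp (2 * lamA * (t₁ - t₀)) / (2 * lamA) - 1 / (2 * lamA))
        = (lamB ^ 2 * (v ⬝ᵥ v) * (Real.exp (2 * lamA * (t₁ - t₀)) - 1)) / (2 * lamA) := by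
      ring
    have e2 : lamB ^ 2 / (2 * lamA) * (Real.exp (2 * lamA * σ) - 1) * (v ⬝ᵥ v)
        = (lamB ^ 2 * (v ⬝ᵥ v) * (Real.exp (2 * lamA * σ) - 1)) / (2 * lamA) := by
      ring
    rw [e1, e2]
    apply div_le_div_of_nonneg_right ?_ h2A.le
    exact mul_le_mul_of_nonneg_left (sub_le_sub_right hexp1 1)
      (mul_nonneg (sq_nonneg _) hvv)
  · -- not integrable: gram = 0
    have hzero : gram Φ B t₀ t₁ = 0 := by
      rw [hgram]
      exact intervalIntegral.integral_undef hInt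
    rw [hzero]
    have : (c • (1 : Matrix (Fin n) (Fin n) ℝ) - 0) = c • 1 - (0 : Matrix (Fin n) (Fin n) ℝ) := rfl
    apply aux_psd_of_form
    · simp
    · intro v
      simp only [Matrix.zero_mulVec, dotProduct_zero]
      exact mul_nonneg hc0 (aux_dot_self_nonneg v)
end

section
/- Suppose the pair (A,B) has Gramian satisfying α₀ I ⪯ W_{A,B}(t₀,t₁) ⪯ α₁ I on [t₀,t₁] ⊆ [t₀,t₀+σ], with ‖A‖_∞ ≤ λ_A, ‖B‖_∞ ≤ λ_B, and let F be continuous with ‖F‖_∞ ≤ λ_F. Then the Gramian of the shifted pair (A+BF, B) satisfies W_{A+BF,B}(t₀,t₁) ⪰ α₀' I where α₀' = (2/α₀ + (λ_F²/λ_A)(1 + α₁/α₀)²(exp(2λ_A σ) − 1))⁻¹. -/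
open Matrix Set
open scoped Matrix.Norms.L2Operator

section Infra
variable {k l n m : ℕ}

/-- mulVec as a continuous bilinear map. -/
noncomputable def mulVecCLM (k l : ℕ) :
    Matrix (Fin k) (Fin l) ℝ →L[ℝ] (Fin l → ℝ) →L[ℝ] (Fin k → ℝ) :=
  LinearMap.toContinuousLinearMap
  { toFun := fun M => LinearMap.toContinuousLinearMap M.mulVecLin
    map_add' := by
      intro M N; ext x
      simp [Matrix.add_mulVec]
    map_smul' := by
      intro c M; ext x
      simp [Matrix.smul_mulVec] }

@[simp] lemma mulVecCLM_apply (M : Matrix (Fin k) (Fin l) ℝ) (x : Fin l → ℝ) :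
    mulVecCLM k l M x = M *ᵥ x := rfl

lemma HasDerivAt.mulVec' {f : ℝ → Matrix (Fin k) (Fin l) ℝ} {g : ℝ → Fin l → ℝ}
    {f' : Matrix (Fin k) (Fin l) ℝ} {g' : Fin l → ℝ} {t : ℝ}
    (hf : HasDerivAt f f' t) (hg : HasDerivAt g g' t) :
    HasDerivAt (fun s => f s *ᵥ g s) (f' *ᵥ g t + f t *ᵥ g') t := by
  have h1 : HasDerivAt (fun s => mulVecCLM k l (f s)) (mulVecCLM k l f') t :=
    (mulVecCLM k l).hasFDerivAt.comp_hasDerivAt t hf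
  simpa using h1.clm_apply hg

/-- dot with a fixed vector on the left, as a CLM. -/
noncomputable def dotCLM (v : Fin k → ℝ) : (Fin k → ℝ) →L[ℝ] ℝ :=
  LinearMap.toContinuousLinearMap
  { toFun := fun w => v ⬝ᵥ w
    map_add' := fun a b => dotProduct_add v a b
    map_smul' := fun c a => dotProduct_smul c v a }

@[simp] lemma dotCLM_apply (v w : Fin k → ℝ) : dotCLM v w = v ⬝ᵥ w := rfl

/-- (fun M => x ⬝ᵥ M *ᵥ y) as a CLM. -/
noncomputable def quadCLM (x : Fin k → ℝ) (y : Fin l → ℝ) :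
    Matrix (Fin k) (Fin l) ℝ →L[ℝ] ℝ :=
  (dotCLM x).comp ((mulVecCLM k l).flip y)

@[simp] lemma quadCLM_apply (x : Fin k → ℝ) (y : Fin l → ℝ) (M : Matrix (Fin k) (Fin l) ℝ) :
    quadCLM x y M = x ⬝ᵥ M *ᵥ y := rfl

/-- transpose as a CLM. -/
noncomputable def transCLM (k l : ℕ) :
    Matrix (Fin k) (Fin l) ℝ →L[ℝ] Matrix (Fin l) (Fin k) ℝ :=
  LinearMap.toContinuousLinearMap
  { toFun := fun M => Mᵀ
    map_add' := fun a b => Matrix.transpose_add a b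
    map_smul' := fun c a => Matrix.transpose_smul c a }

@[simp] lemma transCLM_apply (M : Matrix (Fin k) (Fin l) ℝ) : transCLM k l M = Mᵀ := rfl

/-- Euclidean norm of a plain vector. -/
noncomputable def en (v : Fin k → ℝ) : ℝ := ‖(EuclideanSpace.equiv (Fin k) ℝ).symm v‖

lemma en_nonneg (v : Fin k → ℝ) : 0 ≤ en v := norm_nonneg _

lemma en_sq (v : Fin k → ℝ) : en v ^ 2 = v ⬝ᵥ v := by
  rw [en, EuclideanSpace.norm_eq, Real.sq_sqrt (by positivity)]
  simp [dotProduct, sq]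

lemma en_zero_iff (v : Fin k → ℝ) : en v = 0 ↔ v = 0 := by
  rw [en, norm_eq_zero]
  exact ⟨fun h => congrArg (EuclideanSpace.equiv (Fin k) ℝ) h, fun h => by simp [h]⟩

lemma en_add_le (v w : Fin k → ℝ) : en (v + w) ≤ en v + en w := by
  rw [en, en, en, map_add]; exact norm_add_le _ _

lemma en_neg (v : Fin k → ℝ) : en (-v) = en v := by
  rw [en, en, map_neg, norm_neg]

lemma en_sub_le (v w : Fin k → ℝ) : en (v - w) ≤ en v + en w := by
  rw [sub_eq_add_neg]
  simpa [en_neg] using en_add_le v (-w)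

lemma en_mulVec_le (M : Matrix (Fin k) (Fin l) ℝ) (x : Fin l → ℝ) :
    en (M *ᵥ x) ≤ ‖M‖ * en x :=
  M.l2_opNorm_mulVec _

lemma dot_le_en_mul_en (v w : Fin k → ℝ) : v ⬝ᵥ w ≤ en v * en w := by
  have h : v ⬝ᵥ w = (inner ℝ ((EuclideanSpace.equiv (Fin k) ℝ).symm v)
      ((EuclideanSpace.equiv (Fin k) ℝ).symm w) : ℝ) := by
    simp [PiLp.inner_apply, dotProduct, RCLike.inner_apply, mul_comm]
  rw [h]
  exact real_inner_le_norm _ _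

lemma dot_self_nonneg' (v : Fin k → ℝ) : 0 ≤ v ⬝ᵥ v := by
  rw [← en_sq]; positivity

end Infra

section Flow
variable {n : ℕ}

lemma flow_unique (M : ℝ → Matrix (Fin n) (Fin n) ℝ) (hM : Continuous M)
    (f g : ℝ → Matrix (Fin n) (Fin n) ℝ)
    (hf : ∀ t, HasDerivAt f (M t * f t) t) (hg : ∀ t, HasDerivAt g (M t * g t) t)
    (r : ℝ) (hr : f r = g r) : ∀ t, f t = g t := by
  intro t
  set a := min r t - 1 with ha
  set b := max r t + 1 with hb
  have hab : a < b := by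
    have h1 : min r t ≤ max r t := le_trans (min_le_left _ _) (le_max_left _ _)
    linarith
  have har : r ∈ Ioo a b := by
    constructor
    · have := min_le_left r t; linarith
    · have := le_max_left r t; linarith
  have hat : t ∈ Icc a b := by
    constructor
    · have := min_le_right r t; linarith
    · have := le_max_right r t; linarith
  obtain ⟨C, hC⟩ := (isCompact_Icc (a := a) (b := b)).exists_bound_of_continuousOn
    hM.continuousOn
  set v : ℝ → Matrix (Fin n) (Fin n) ℝ → Matrix (Fin n) (Fin n) ℝ :=
    fun τ X => M (max a (min τ b)) * X with hv
  have hcl : ∀ τ, max a (min τ b) ∈ Icc a b := fun τ =>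
    ⟨le_max_left _ _, max_le hab.le (min_le_right _ _)⟩
  have hvlip : ∀ τ : ℝ, LipschitzOnWith (Real.toNNReal C) (v τ)
      ((fun _ => (univ : Set (Matrix (Fin n) (Fin n) ℝ))) τ) := by
    intro τ
    rw [lipschitzOnWith_univ]
    apply LipschitzWith.of_dist_le_mul
    intro X Y
    rw [dist_eq_norm, dist_eq_norm, hv]
    simp only
    rw [← mul_sub]
    calc ‖M (max a (min τ b)) * (X - Y)‖ ≤ ‖M (max a (min τ b))‖ * ‖X - Y‖ := norm_mul_le _ _
      _ ≤ Real.toNNReal C * ‖X - Y‖ := by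
          apply mul_le_mul_of_nonneg_right _ (norm_nonneg _)
          exact le_trans (hC _ (hcl τ)) (Real.le_coe_toNNReal C)
  have key : ∀ τ ∈ Ioo a b, v τ = fun X => M τ * X := by
    intro τ hτ
    have : max a (min τ b) = τ := by
      rw [min_eq_left hτ.2.le, max_eq_right hτ.1.le]
    rw [hv]; simp only [this]
  have heq : EqOn f g (Icc a b) := by
    apply ODE_solution_unique_of_mem_Icc (v := v) (s := fun _ => univ) (fun τ _ => hvlip τ) har
    · exact fun τ _ => (hf τ).continuousAt.continuousWithinAt
    · intro τ hτ
      rw [key τ hτ]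
      exact hf τ
    · exact fun _ _ => mem_univ _
    · exact fun τ _ => (hg τ).continuousAt.continuousWithinAt
    · intro τ hτ
      rw [key τ hτ]
      exact hg τ
    · exact fun _ _ => mem_univ _
    · exact hr
  exact heq hat

variable (M : ℝ → Matrix (Fin n) (Fin n) ℝ) (Φ : ℝ → ℝ → Matrix (Fin n) (Fin n) ℝ)

lemma flow_cocycle (hM : Continuous M)
    (hd : ∀ s t : ℝ, HasDerivAt (fun r => Φ r s) (M t * Φ t s) t)
    (hi : ∀ s : ℝ, Φ s s = 1) (t r s : ℝ) : Φ t r * Φ r s = Φ t s := by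
  have := flow_unique M hM (fun u => Φ u r * Φ r s) (fun u => Φ u s)
    (fun u => by simpa [mul_assoc] using (hd r u).mul_const (Φ r s))
    (hd s) r (by show Φ r r * Φ r s = Φ r s; rw [hi r, one_mul])
  exact this t

lemma flow_inv (hM : Continuous M)
    (hd : ∀ s t : ℝ, HasDerivAt (fun r => Φ r s) (M t * Φ t s) t)
    (hi : ∀ s : ℝ, Φ s s = 1) (t s : ℝ) : Φ t s * Φ s t = 1 := by
  rw [flow_cocycle M Φ hM hd hi t s t, hi]

/-- `Φ t s` as a unit. -/
noncomputable def flowUnit (hM : Continuous M)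
    (hd : ∀ s t : ℝ, HasDerivAt (fun r => Φ r s) (M t * Φ t s) t)
    (hi : ∀ s : ℝ, Φ s s = 1) (t s : ℝ) : (Matrix (Fin n) (Fin n) ℝ)ˣ where
  val := Φ t s
  inv := Φ s t
  val_inv := flow_inv M Φ hM hd hi t s
  inv_val := flow_inv M Φ hM hd hi s t

lemma flow_back (hM : Continuous M)
    (hd : ∀ s t : ℝ, HasDerivAt (fun r => Φ r s) (M t * Φ t s) t)
    (hi : ∀ s : ℝ, Φ s s = 1) (a t : ℝ) :
    HasDerivAt (fun s => Φ a s) (-(Φ a t * M t)) t := by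
  have hfun : (fun s => Φ a s) = fun s => Ring.inverse (Φ s a) := by
    funext s
    exact (Ring.inverse_unit (flowUnit M Φ hM hd hi s a)).symm
  rw [hfun]
  have h1 : HasFDerivAt Ring.inverse
      (-ContinuousLinearMap.mulLeftRight ℝ (Matrix (Fin n) (Fin n) ℝ) (Φ a t) (Φ a t))
      (Φ t a) := by
    have := hasFDerivAt_ringInverse (𝕜 := ℝ) (flowUnit M Φ hM hd hi t a)
    convert this using 2 <;> rfl
  have h2 := h1.comp_hasDerivAt t (hd a t)
  refine h2.congr_deriv ?_
  simp only [ContinuousLinearMap.neg_apply, ContinuousLinearMap.mulLeftRight_apply]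
  rw [neg_inj, mul_assoc (Φ a t) (M t * Φ t a) (Φ a t), mul_assoc (M t) (Φ t a) (Φ a t),
    flow_inv M Φ hM hd hi t a, mul_one]

lemma flow_cont_right (hM : Continuous M)
    (hd : ∀ s t : ℝ, HasDerivAt (fun r => Φ r s) (M t * Φ t s) t)
    (hi : ∀ s : ℝ, Φ s s = 1) (a : ℝ) : Continuous (fun s => Φ a s) :=
  continuous_iff_continuousAt.2 fun t => (flow_back M Φ hM hd hi a t).continuousAt

lemma flow_cont_left (hd : ∀ s t : ℝ, HasDerivAt (fun r => Φ r s) (M t * Φ t s) t) (a : ℝ) :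
    Continuous (fun s => Φ s a) :=
  continuous_iff_continuousAt.2 fun t => (hd a t).continuousAt

lemma norm_one_le_matrix : ‖(1 : Matrix (Fin n) (Fin n) ℝ)‖ ≤ 1 := by
  rw [Matrix.cstar_norm_def, _root_.map_one, ContinuousLinearMap.one_def]
  exact ContinuousLinearMap.norm_id_le

/-- Grönwall bound on the flow. -/
lemma flow_gronwall (hd : ∀ s t : ℝ, HasDerivAt (fun r => Φ r s) (M t * Φ t s) t)
    (hi : ∀ s : ℝ, Φ s s = 1) {t₀ b K : ℝ}
    (hMb : ∀ t ∈ Icc t₀ b, ‖M t‖ ≤ K) :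
    ∀ t ∈ Icc t₀ b, ‖Φ t t₀‖ ≤ Real.exp (K * (t - t₀)) := by
  intro t ht
  have key := norm_le_gronwallBound_of_norm_deriv_right_le
    (f := fun s => Φ s t₀) (f' := fun s => M s * Φ s t₀) (δ := 1) (K := K) (ε := 0)
    (a := t₀) (b := b)
    (fun s _ => (hd t₀ s).continuousAt.continuousWithinAt)
    (fun s _ => (hd t₀ s).hasDerivWithinAt)
    (by show ‖Φ t₀ t₀‖ ≤ 1; rw [hi t₀]; exact norm_one_le_matrix)
    (fun s hs => by
      rw [add_zero]
      calc ‖M s * Φ s t₀‖ ≤ ‖M s‖ * ‖Φ s t₀‖ := norm_mul_le _ _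
        _ ≤ K * ‖Φ s t₀‖ := by
            apply mul_le_mul_of_nonneg_right _ (norm_nonneg _)
            exact hMb s ⟨hs.1, hs.2.le⟩)
    t ht
  rwa [gronwallBound_ε0, one_mul] at key

end Flow

section GramSec
variable {n m : ℕ}

variable {Φ : ℝ → ℝ → Matrix (Fin n) (Fin n) ℝ} {B : ℝ → Matrix (Fin n) (Fin m) ℝ} {t₀ : ℝ}

lemma dmv {a b : ℕ} (Mk : Matrix (Fin a) (Fin b) ℝ) (x : Fin a → ℝ) (y : Fin b → ℝ) :
    x ⬝ᵥ (Mk *ᵥ y) = (Mkᵀ *ᵥ x) ⬝ᵥ y := by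
  rw [Matrix.dotProduct_mulVec, ← Matrix.mulVec_transpose]

lemma quad_factor (P : Matrix (Fin n) (Fin n) ℝ) (Bm : Matrix (Fin n) (Fin m) ℝ)
    (x : Fin n → ℝ) :
    x ⬝ᵥ (P * Bm * Bmᵀ * Pᵀ) *ᵥ x = (Bmᵀ *ᵥ (Pᵀ *ᵥ x)) ⬝ᵥ (Bmᵀ *ᵥ (Pᵀ *ᵥ x)) := by
  have h1 : P * Bm * Bmᵀ * Pᵀ = (P * Bm) * (P * Bm)ᵀ := by
    rw [Matrix.transpose_mul, Matrix.mul_assoc]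
  have h2 : Bmᵀ *ᵥ (Pᵀ *ᵥ x) = (P * Bm)ᵀ *ᵥ x := by
    rw [Matrix.mulVec_mulVec, Matrix.transpose_mul]
  rw [h1, h2, ← Matrix.mulVec_mulVec, dmv]

lemma gram_integrand_cont (hΦ : Continuous (fun s => Φ t₀ s)) (hB : Continuous B) :
    Continuous (fun s => Φ t₀ s * B s * (B s)ᵀ * (Φ t₀ s)ᵀ) :=
  ((hΦ.matrix_mul hB).matrix_mul hB.matrix_transpose).matrix_mul hΦ.matrix_transpose

lemma gram_quad (hΦ : Continuous (fun s => Φ t₀ s)) (hB : Continuous B) (c : ℝ)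
    (x : Fin n → ℝ) :
    x ⬝ᵥ (gram Φ B t₀ c) *ᵥ x
      = ∫ s in t₀..c, ((B s)ᵀ *ᵥ ((Φ t₀ s)ᵀ *ᵥ x)) ⬝ᵥ ((B s)ᵀ *ᵥ ((Φ t₀ s)ᵀ *ᵥ x)) := by
  have hint : IntervalIntegrable (fun s => Φ t₀ s * B s * (B s)ᵀ * (Φ t₀ s)ᵀ)
      MeasureTheory.volume t₀ c := (gram_integrand_cont hΦ hB).intervalIntegrable _ _
  rw [_root_.gram]
  calc x ⬝ᵥ (∫ s in t₀..c, Φ t₀ s * B s * (B s)ᵀ * (Φ t₀ s)ᵀ) *ᵥ x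
      = quadCLM x x (∫ s in t₀..c, Φ t₀ s * B s * (B s)ᵀ * (Φ t₀ s)ᵀ) := rfl
    _ = ∫ s in t₀..c, quadCLM x x (Φ t₀ s * B s * (B s)ᵀ * (Φ t₀ s)ᵀ) :=
        ((quadCLM x x).intervalIntegral_comp_comm hint).symm
    _ = _ := by
        congr 1
        funext s
        rw [quadCLM_apply, quad_factor]

lemma gram_herm (hΦ : Continuous (fun s => Φ t₀ s)) (hB : Continuous B) (c : ℝ) :
    (gram Φ B t₀ c).IsHermitian := by
  have hint : IntervalIntegrable (fun s => Φ t₀ s * B s * (B s)ᵀ * (Φ t₀ s)ᵀ)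
      MeasureTheory.volume t₀ c := (gram_integrand_cont hΦ hB).intervalIntegrable _ _
  rw [Matrix.IsHermitian, Matrix.conjTranspose_eq_transpose_of_trivial]
  calc (gram Φ B t₀ c)ᵀ = transCLM n n (gram Φ B t₀ c) := rfl
    _ = ∫ s in t₀..c, transCLM n n (Φ t₀ s * B s * (B s)ᵀ * (Φ t₀ s)ᵀ) :=
        ((transCLM n n).intervalIntegral_comp_comm hint).symm
    _ = gram Φ B t₀ c := by
        rw [_root_.gram]
        congr 1
        funext s
        rw [transCLM_apply]
        simp only [Matrix.transpose_mul, Matrix.transpose_transpose]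
        rw [Matrix.mul_assoc, Matrix.mul_assoc]

lemma gram_hasDeriv (hΦ : Continuous (fun s => Φ t₀ s)) (hB : Continuous B) (c : ℝ) :
    HasDerivAt (fun u => gram Φ B t₀ u) (Φ t₀ c * B c * (B c)ᵀ * (Φ t₀ c)ᵀ) c := by
  have hcont := gram_integrand_cont hΦ hB
  exact intervalIntegral.integral_hasDerivAt_right
    (hcont.intervalIntegrable _ _)
    (hcont.stronglyMeasurableAtFilter _ _)
    hcont.continuousAt

lemma gram_cont (hΦ : Continuous (fun s => Φ t₀ s)) (hB : Continuous B) :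
    Continuous (fun u => gram Φ B t₀ u) :=
  continuous_iff_continuousAt.2 fun c => (gram_hasDeriv hΦ hB c).continuousAt

end GramSec

section PSDSec
variable {n : ℕ}

lemma quad_lb_of_psd {M : Matrix (Fin n) (Fin n) ℝ} {α : ℝ}
    (h : (M - α • 1).PosSemidef) (x : Fin n → ℝ) : α * (x ⬝ᵥ x) ≤ x ⬝ᵥ M *ᵥ x := by
  have := h.dotProduct_mulVec_nonneg x
  rw [star_trivial, Matrix.sub_mulVec, Matrix.smul_mulVec, Matrix.one_mulVec,
    dotProduct_sub, dotProduct_smul] at this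
  simp only [smul_eq_mul] at this
  linarith

lemma quad_ub_of_psd {M : Matrix (Fin n) (Fin n) ℝ} {α : ℝ}
    (h : (α • (1 : Matrix (Fin n) (Fin n) ℝ) - M).PosSemidef) (x : Fin n → ℝ) :
    x ⬝ᵥ M *ᵥ x ≤ α * (x ⬝ᵥ x) := by
  have := h.dotProduct_mulVec_nonneg x
  rw [star_trivial, Matrix.sub_mulVec, Matrix.smul_mulVec, Matrix.one_mulVec,
    dotProduct_sub, dotProduct_smul] at this
  simp only [smul_eq_mul] at this
  linarith

lemma dot_self_pos {x : Fin n → ℝ} (hx : x ≠ 0) : 0 < x ⬝ᵥ x := by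
  rcases lt_or_eq_of_le (dot_self_nonneg' x) with h | h
  · exact h
  · exact absurd (dotProduct_self_eq_zero.mp h.symm) hx

open scoped MatrixOrder in
lemma psd_mulVec_en_le {M : Matrix (Fin n) (Fin n) ℝ} (hM : M.PosSemidef) {β : ℝ}
    (hub : ∀ x, x ⬝ᵥ M *ᵥ x ≤ β * (x ⬝ᵥ x)) (x : Fin n → ℝ) :
    en (M *ᵥ x) ≤ β * en x := by
  by_cases hx : x = 0
  · have e0 : en (0 : Fin n → ℝ) = 0 := (en_zero_iff _).2 rfl
    rw [hx, Matrix.mulVec_zero, e0, mul_zero]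
  · have hxx : 0 < x ⬝ᵥ x := dot_self_pos hx
    have hMq : 0 ≤ x ⬝ᵥ M *ᵥ x := by simpa [star_trivial] using hM.dotProduct_mulVec_nonneg x
    have hβ : 0 ≤ β := by
      by_contra hc
      push_neg at hc
      nlinarith [hub x]
    have hMt : Mᵀ = M := by
      rw [← Matrix.conjTranspose_eq_transpose_of_trivial]
      exact hM.1
    set S := CFC.sqrt M with hS
    have hSS : S * S = M := CFC.sqrt_mul_sqrt_self M hM.nonneg
    have hSherm : Sᵀ = S := by
      rw [← Matrix.conjTranspose_eq_transpose_of_trivial]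
      exact (CFC.sqrt_nonneg M).posSemidef.1
    -- (M x)⬝(M x) = x ⬝ (MᵀM) x = (Sx) ⬝ M (Sx)
    have hdms : ∀ (N : Matrix (Fin n) (Fin n) ℝ) (y : Fin n → ℝ),
        (N *ᵥ y) ⬝ᵥ (N *ᵥ y) = y ⬝ᵥ ((Nᵀ * N) *ᵥ y) := by
      intro N y
      rw [← Matrix.mulVec_mulVec, dmv Nᵀ y (N *ᵥ y), Matrix.transpose_transpose]
    have key : (M *ᵥ x) ⬝ᵥ (M *ᵥ x) = (S *ᵥ x) ⬝ᵥ (M *ᵥ (S *ᵥ x)) := by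
      have h2 : Mᵀ * M = S * (M * S) := by
        rw [hMt, ← hSS]
        noncomm_ring
      rw [hdms M x, h2, ← Matrix.mulVec_mulVec, dmv S x ((M * S) *ᵥ x), hSherm,
        ← Matrix.mulVec_mulVec]
    have hchain : (M *ᵥ x) ⬝ᵥ (M *ᵥ x) ≤ β ^ 2 * (x ⬝ᵥ x) := by
      rw [key]
      have h3 : (S *ᵥ x) ⬝ᵥ (M *ᵥ (S *ᵥ x)) ≤ β * ((S *ᵥ x) ⬝ᵥ (S *ᵥ x)) := hub _
      have h4 : (S *ᵥ x) ⬝ᵥ (S *ᵥ x) = x ⬝ᵥ (M *ᵥ x) := by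
        rw [hdms S x, hSherm, hSS]
      have h5 : x ⬝ᵥ (M *ᵥ x) ≤ β * (x ⬝ᵥ x) := hub x
      calc (S *ᵥ x) ⬝ᵥ (M *ᵥ (S *ᵥ x)) ≤ β * ((S *ᵥ x) ⬝ᵥ (S *ᵥ x)) := h3
        _ = β * (x ⬝ᵥ (M *ᵥ x)) := by rw [h4]
        _ ≤ β * (β * (x ⬝ᵥ x)) := by
            exact mul_le_mul_of_nonneg_left h5 hβ
        _ = β ^ 2 * (x ⬝ᵥ x) := by ring
    have : en (M *ᵥ x) ^ 2 ≤ (β * en x) ^ 2 := by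
      rw [en_sq, mul_pow, en_sq]
      exact hchain
    exact (pow_le_pow_iff_left₀ (en_nonneg _) (mul_nonneg hβ (en_nonneg _)) two_ne_zero).mp this

end PSDSec

set_option maxHeartbeats 1000000 in
/-- if α₀ I ⪯ W_{A,B}(t₀,t₁) ⪯ α₁ I on [t₀,t₁] ⊆ [t₀,t₀+σ], with
‖A‖ ≤ λ_A, ‖B‖ ≤ λ_B, ‖F‖ ≤ λ_F, then the Gramian of the shifted pair (A+BF, B)
satisfies W_{A+BF,B}(t₀,t₁) ⪰ (2/α₀ + (λ_F²/λ_A)(1+α₁/α₀)²(e^{2λ_Aσ} − 1))⁻¹ I. -/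
theorem stmt_9 {n m : ℕ} (t₀ t₁ σ lamA lamB lamF α₀ α₁ : ℝ)
    (hσ : 0 ≤ σ) (ht : t₀ ≤ t₁) (ht1 : t₁ ≤ t₀ + σ)
    (hlamA : 0 < lamA) (hα₀ : 0 < α₀)
    (A : ℝ → Matrix (Fin n) (Fin n) ℝ) (B : ℝ → Matrix (Fin n) (Fin m) ℝ)
    (F : ℝ → Matrix (Fin m) (Fin n) ℝ)
    (hAc : Continuous A) (hBc : Continuous B) (hFc : Continuous F)
    (hAb : ∀ t ∈ Icc t₀ (t₀ + σ), ‖A t‖ ≤ lamA)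
    (hBb : ∀ t ∈ Icc t₀ (t₀ + σ), ‖B t‖ ≤ lamB)
    (hFb : ∀ t ∈ Icc t₀ (t₀ + σ), ‖F t‖ ≤ lamF)
    (ΦA : ℝ → ℝ → Matrix (Fin n) (Fin n) ℝ)
    (hΦAderiv : ∀ s t : ℝ, HasDerivAt (fun r => ΦA r s) (A t * ΦA t s) t)
    (hΦAinit : ∀ s : ℝ, ΦA s s = 1)
    (ΦS : ℝ → ℝ → Matrix (Fin n) (Fin n) ℝ)
    (hΦSderiv : ∀ s t : ℝ, HasDerivAt (fun r => ΦS r s) ((A t + B t * F t) * ΦS t s) t)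
    (hΦSinit : ∀ s : ℝ, ΦS s s = 1)
    (hgl : (gram ΦA B t₀ t₁ - α₀ • 1).PosSemidef)
    (hgu : (α₁ • (1 : Matrix (Fin n) (Fin n) ℝ) - gram ΦA B t₀ t₁).PosSemidef) :
    (gram ΦS B t₀ t₁ -
        (2 / α₀ + lamF ^ 2 / lamA * (1 + α₁ / α₀) ^ 2 *
          (Real.exp (2 * lamA * σ) - 1))⁻¹ • 1).PosSemidef := by
  classical
  set D : ℝ := 2 / α₀ + lamF ^ 2 / lamA * (1 + α₁ / α₀) ^ 2 *
    (Real.exp (2 * lamA * σ) - 1) with hDdef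
  set AS : ℝ → Matrix (Fin n) (Fin n) ℝ := fun t => A t + B t * F t with hASdef
  have hASc : Continuous AS := hAc.add (hBc.matrix_mul hFc)
  have hΦAr : Continuous (fun s => ΦA t₀ s) :=
    flow_cont_right A ΦA hAc hΦAderiv hΦAinit t₀
  have hΦSr : Continuous (fun s => ΦS t₀ s) :=
    flow_cont_right AS ΦS hASc hΦSderiv hΦSinit t₀
  have hΦAl : Continuous (fun s => ΦA s t₀) := flow_cont_left A ΦA hΦAderiv t₀
  have ht₀mem : t₀ ∈ Icc t₀ (t₀ + σ) := ⟨le_refl _, by linarith⟩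
  have hlamF0 : 0 ≤ lamF := le_trans (norm_nonneg (F t₀)) (hFb t₀ ht₀mem)
  have hexpσ : 1 ≤ Real.exp (2 * lamA * σ) := by
    rw [← Real.exp_zero]
    apply Real.exp_le_exp.2
    positivity
  have hD0 : 0 < D := by
    rw [hDdef]
    have h1 : 0 < 2 / α₀ := by positivity
    have h2 : 0 ≤ lamF ^ 2 / lamA * (1 + α₁ / α₀) ^ 2 * (Real.exp (2 * lamA * σ) - 1) := by
      apply mul_nonneg (by positivity)
      linarith
    linarith
  -- Hermitian part
  have hermS : (gram ΦS B t₀ t₁ - D⁻¹ • 1).IsHermitian := by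
    apply Matrix.IsHermitian.sub (gram_herm hΦSr hBc t₁)
    rw [Matrix.IsHermitian, Matrix.conjTranspose_smul, Matrix.conjTranspose_one, star_trivial]
  refine .of_dotProduct_mulVec_nonneg hermS fun v => ?_
  rw [star_trivial]
  -- reduce to quadratic form bound
  rw [Matrix.sub_mulVec, Matrix.smul_mulVec, Matrix.one_mulVec, dotProduct_sub,
    dotProduct_smul, smul_eq_mul]
  rw [sub_nonneg]
  by_cases hv : v = 0
  · simp [hv]
  -- main case
  set V : ℝ := v ⬝ᵥ v with hVdef
  have hV : 0 < V := dot_self_pos hv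
  have hα₁ : 0 < α₁ := by
    have h1 := quad_lb_of_psd hgl v
    have h2 := quad_ub_of_psd hgu v
    nlinarith
  set W : Matrix (Fin n) (Fin n) ℝ := gram ΦA B t₀ t₁ with hWdef
  have hWherm : W.IsHermitian := gram_herm hΦAr hBc t₁
  have hWpd : W.PosDef := by
    refine .of_dotProduct_mulVec_pos hWherm fun x hx => ?_
    rw [star_trivial]
    exact lt_of_lt_of_le (mul_pos hα₀ (dot_self_pos hx)) (quad_lb_of_psd hgl x)
  set q : Fin n → ℝ := W⁻¹ *ᵥ v with hqdef
  have hWq : W *ᵥ q = v := by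
    rw [hqdef, Matrix.mulVec_mulVec, Matrix.mul_nonsing_inv _
      ((Matrix.isUnit_iff_isUnit_det _).1 hWpd.isUnit), Matrix.one_mulVec]
  -- functions
  set G : ℝ → Matrix (Fin n) (Fin n) ℝ := fun c => gram ΦA B t₀ c with hGdef
  set z : ℝ → Fin n → ℝ := fun c => v - G c *ᵥ q with hzdef
  set xt : ℝ → Fin n → ℝ := fun c => ΦA c t₀ *ᵥ z c with hxdef
  set p : ℝ → Fin m → ℝ := fun s => (B s)ᵀ *ᵥ ((ΦA t₀ s)ᵀ *ᵥ q) with hpdef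
  set u : ℝ → Fin m → ℝ := fun s => -(p s) - F s *ᵥ xt s with hudef
  set rr : ℝ → Fin m → ℝ := fun s => (B s)ᵀ *ᵥ ((ΦS t₀ s)ᵀ *ᵥ v) with hrdef
  -- continuity
  have hGc : Continuous G := gram_cont hΦAr hBc
  have hzc : Continuous z := continuous_const.sub (hGc.matrix_mulVec continuous_const)
  have hxc : Continuous xt := hΦAl.matrix_mulVec hzc
  have hpc : Continuous p :=
    hBc.matrix_transpose.matrix_mulVec (hΦAr.matrix_transpose.matrix_mulVec continuous_const)
  have huc : Continuous u := hpc.neg.sub (hFc.matrix_mulVec hxc)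
  have hrc : Continuous rr :=
    hBc.matrix_transpose.matrix_mulVec (hΦSr.matrix_transpose.matrix_mulVec continuous_const)
  -- derivative of z
  have hz' : ∀ c : ℝ, HasDerivAt z
      (-((ΦA t₀ c * B c * (B c)ᵀ * (ΦA t₀ c)ᵀ) *ᵥ q)) c := by
    intro c
    have h1 : HasDerivAt (fun c => G c *ᵥ q)
        ((ΦA t₀ c * B c * (B c)ᵀ * (ΦA t₀ c)ᵀ) *ᵥ q) c := by
      have h2 := ((mulVecCLM n n).flip q).hasFDerivAt.comp_hasDerivAt c
        (gram_hasDeriv hΦAr hBc c)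
      exact h2
    exact ((hasDerivAt_const c v).sub h1).congr_deriv (zero_sub _)
  -- derivative of x
  have hcollA : ∀ (c : ℝ) (w : Fin n → ℝ), ΦA c t₀ *ᵥ (ΦA t₀ c *ᵥ w) = w := by
    intro c w
    rw [Matrix.mulVec_mulVec, flow_inv A ΦA hAc hΦAderiv hΦAinit c t₀, Matrix.one_mulVec]
  have hx' : ∀ c : ℝ, HasDerivAt xt (A c *ᵥ xt c - B c *ᵥ p c) c := by
    intro c
    have h := (hΦAderiv t₀ c).mulVec' (hz' c)
    convert h using 1
    rw [hxdef, hpdef]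
    simp only [← Matrix.mulVec_mulVec, Matrix.mulVec_neg]
    rw [hcollA c]
    abel
  -- derivative of y
  have hy' : ∀ c : ℝ, HasDerivAt (fun s => ΦS t₀ s *ᵥ xt s)
      (ΦS t₀ c *ᵥ (B c *ᵥ u c)) c := by
    intro c
    have h := (flow_back AS ΦS hASc hΦSderiv hΦSinit t₀ c).mulVec' (hx' c)
    convert h using 1
    rw [hudef, hASdef]
    simp only [Matrix.neg_mulVec, ← Matrix.mulVec_mulVec, Matrix.add_mulVec,
      Matrix.mulVec_add, Matrix.mulVec_sub, Matrix.mulVec_neg, Matrix.sub_mulVec]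
    abel
  -- FTC: the steering identity
  have hIu : IntervalIntegrable (fun s => ΦS t₀ s *ᵥ (B s *ᵥ u s))
      MeasureTheory.volume t₀ t₁ :=
    (hΦSr.matrix_mulVec (hBc.matrix_mulVec huc)).intervalIntegrable _ _
  have hsteer : (∫ s in t₀..t₁, ΦS t₀ s *ᵥ (B s *ᵥ u s)) = -v := by
    have hftc := intervalIntegral.integral_eq_sub_of_hasDerivAt
      (f := fun s => ΦS t₀ s *ᵥ xt s) (fun s _ => hy' s) hIu
    rw [hftc]
    show ΦS t₀ t₁ *ᵥ xt t₁ - ΦS t₀ t₀ *ᵥ xt t₀ = -v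
    have hxt₀ : xt t₀ = v := by
      rw [hxdef]
      simp only
      rw [hΦAinit t₀, Matrix.one_mulVec, hzdef]
      simp only
      rw [hGdef]
      simp only [_root_.gram, intervalIntegral.integral_same, Matrix.zero_mulVec, sub_zero]
    have hxt₁ : xt t₁ = 0 := by
      rw [hxdef]
      simp only
      rw [hzdef]
      simp only
      have hGt1 : G t₁ = W := rfl
      rw [hGt1, hWq, sub_self, Matrix.mulVec_zero]
    rw [hxt₁, hxt₀, Matrix.mulVec_zero, hΦSinit t₀, Matrix.one_mulVec, zero_sub]
  -- quantities
  set Q : ℝ := v ⬝ᵥ (gram ΦS B t₀ t₁) *ᵥ v with hQdef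
  set E : ℝ := ∫ s in t₀..t₁, u s ⬝ᵥ u s with hEdef
  have hQr : Q = ∫ s in t₀..t₁, rr s ⬝ᵥ rr s := gram_quad hΦSr hBc t₁ v
  have hQ0 : 0 ≤ Q := by
    rw [hQr]
    apply intervalIntegral.integral_nonneg ht
    exact fun s _ => dot_self_nonneg' _
  -- ∫ rr ⬝ u = -V
  have hru : (∫ s in t₀..t₁, rr s ⬝ᵥ u s) = -V := by
    have hpt : ∀ s, rr s ⬝ᵥ u s = v ⬝ᵥ (ΦS t₀ s *ᵥ (B s *ᵥ u s)) := by
      intro s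
      rw [dmv (ΦS t₀ s) v (B s *ᵥ u s), dmv (B s) ((ΦS t₀ s)ᵀ *ᵥ v) (u s), hrdef]
    calc (∫ s in t₀..t₁, rr s ⬝ᵥ u s)
        = ∫ s in t₀..t₁, dotCLM v (ΦS t₀ s *ᵥ (B s *ᵥ u s)) := by
          congr 1; funext s; rw [hpt s, dotCLM_apply]
      _ = dotCLM v (∫ s in t₀..t₁, ΦS t₀ s *ᵥ (B s *ᵥ u s)) :=
          (dotCLM v).intervalIntegral_comp_comm hIu
      _ = v ⬝ᵥ (-v) := by rw [hsteer, dotCLM_apply]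
      _ = -V := by rw [dotProduct_neg, hVdef]
  -- quadratic nonnegativity in c
  have hIrr : IntervalIntegrable (fun s => rr s ⬝ᵥ rr s) MeasureTheory.volume t₀ t₁ :=
    (hrc.dotProduct hrc).intervalIntegrable _ _
  have hIru : IntervalIntegrable (fun s => rr s ⬝ᵥ u s) MeasureTheory.volume t₀ t₁ :=
    (hrc.dotProduct huc).intervalIntegrable _ _
  have hIuu : IntervalIntegrable (fun s => u s ⬝ᵥ u s) MeasureTheory.volume t₀ t₁ :=
    (huc.dotProduct huc).intervalIntegrable _ _
  have hVQE : V ^ 2 ≤ Q * E := by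
    have hkey : ∀ c : ℝ, 0 ≤ Q * (c * c) + (-2 * V) * c + E := by
      intro c
      have hptexp : ∀ (a b : Fin m → ℝ), (c • a + b) ⬝ᵥ (c • a + b)
          = c * c * (a ⬝ᵥ a) + 2 * c * (a ⬝ᵥ b) + b ⬝ᵥ b := by
        intro a b
        have hcomm := dotProduct_comm b a
        simp only [dotProduct_add, add_dotProduct, smul_dotProduct, dotProduct_smul,
          smul_eq_mul, hcomm]
        ring
      have hnn : 0 ≤ ∫ s in t₀..t₁, (c • rr s + u s) ⬝ᵥ (c • rr s + u s) :=
        intervalIntegral.integral_nonneg ht (fun s _ => dot_self_nonneg' _)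
      have hsplit : (∫ s in t₀..t₁, (c • rr s + u s) ⬝ᵥ (c • rr s + u s))
          = (c * c) * (∫ s in t₀..t₁, rr s ⬝ᵥ rr s)
            + (2 * c) * (∫ s in t₀..t₁, rr s ⬝ᵥ u s) + E := by
        rw [hEdef]
        rw [← intervalIntegral.integral_const_mul, ← intervalIntegral.integral_const_mul,
          ← intervalIntegral.integral_add ((hIrr.const_mul _)) ((hIru.const_mul _)),
          ← intervalIntegral.integral_add (((hIrr.const_mul _)).add ((hIru.const_mul _))) hIuu]
        congr 1
        funext s
        rw [hptexp]
      rw [hsplit, hru, ← hQr] at hnn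
      nlinarith [hnn]
    have hdisc := discrim_le_zero hkey
    rw [discrim] at hdisc
    nlinarith [hdisc]
  -- energy bound
  -- bound on q
  have hqv : en q ≤ en v / α₀ := by
    have h1 : α₀ * (q ⬝ᵥ q) ≤ q ⬝ᵥ W *ᵥ q := quad_lb_of_psd hgl q
    have h2 : q ⬝ᵥ W *ᵥ q = q ⬝ᵥ v := by rw [hWq]
    have h3 : q ⬝ᵥ v ≤ en q * en v := dot_le_en_mul_en q v
    have h4 : q ⬝ᵥ q = en q ^ 2 := (en_sq q).symm
    rcases eq_or_lt_of_le (en_nonneg q) with h | h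
    · rw [← h]; exact div_nonneg (en_nonneg v) hα₀.le
    · rw [h4] at h1
      have h5 : α₀ * en q ^ 2 ≤ en q * en v := by linarith
      have h6 : α₀ * en q ≤ en v := by nlinarith
      calc en q = (α₀ * en q) / α₀ := by field_simp
        _ ≤ en v / α₀ := by gcongr
  -- ∫ p ⬝ p = q ⬝ v ≤ V / α₀
  have hppI : (∫ s in t₀..t₁, p s ⬝ᵥ p s) ≤ V / α₀ := by
    have h1 : (∫ s in t₀..t₁, p s ⬝ᵥ p s) = q ⬝ᵥ W *ᵥ q := (gram_quad hΦAr hBc t₁ q).symm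
    have h2 : q ⬝ᵥ W *ᵥ q = q ⬝ᵥ v := by rw [hWq]
    have h3 : q ⬝ᵥ v ≤ en q * en v := dot_le_en_mul_en q v
    have h4 : en q * en v ≤ (en v / α₀) * en v :=
      mul_le_mul_of_nonneg_right hqv (en_nonneg v)
    have h5 : (en v / α₀) * en v = V / α₀ := by
      rw [div_mul_eq_mul_div, ← sq, en_sq, hVdef]
    linarith
  -- pointwise bound on x
  have hzb : ∀ s ∈ Icc t₀ t₁, en (z s) ≤ (1 + α₁ / α₀) * en v := by
    intro s hs
    have hGpsd : (G s).PosSemidef := by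
      refine .of_dotProduct_mulVec_nonneg (gram_herm hΦAr hBc s) fun x => ?_
      rw [star_trivial, gram_quad hΦAr hBc s x]
      exact intervalIntegral.integral_nonneg hs.1 (fun τ _ => dot_self_nonneg' _)
    have hGub : ∀ x, x ⬝ᵥ (G s) *ᵥ x ≤ α₁ * (x ⬝ᵥ x) := by
      intro x
      have hsplit2 := intervalIntegral.integral_add_adjacent_intervals
        (μ := MeasureTheory.volume) (a := t₀) (b := s) (c := t₁)
        (f := fun τ => ((B τ)ᵀ *ᵥ ((ΦA t₀ τ)ᵀ *ᵥ x)) ⬝ᵥ ((B τ)ᵀ *ᵥ ((ΦA t₀ τ)ᵀ *ᵥ x)))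
        (((hBc.matrix_transpose.matrix_mulVec
          (hΦAr.matrix_transpose.matrix_mulVec continuous_const)).dotProduct
          (hBc.matrix_transpose.matrix_mulVec
          (hΦAr.matrix_transpose.matrix_mulVec continuous_const))).intervalIntegrable _ _)
        (((hBc.matrix_transpose.matrix_mulVec
          (hΦAr.matrix_transpose.matrix_mulVec continuous_const)).dotProduct
          (hBc.matrix_transpose.matrix_mulVec
          (hΦAr.matrix_transpose.matrix_mulVec continuous_const))).intervalIntegrable _ _)
      have h2nd : 0 ≤ ∫ τ in s..t₁,
          ((B τ)ᵀ *ᵥ ((ΦA t₀ τ)ᵀ *ᵥ x)) ⬝ᵥ ((B τ)ᵀ *ᵥ ((ΦA t₀ τ)ᵀ *ᵥ x)) :=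
        intervalIntegral.integral_nonneg hs.2 (fun τ _ => dot_self_nonneg' _)
      have hle : x ⬝ᵥ (G s) *ᵥ x ≤ x ⬝ᵥ W *ᵥ x := by
        rw [gram_quad hΦAr hBc s x, gram_quad hΦAr hBc t₁ x]
        linarith [hsplit2]
      exact le_trans hle (quad_ub_of_psd hgu x)
    have h1 : en (G s *ᵥ q) ≤ α₁ * en q := psd_mulVec_en_le hGpsd hGub q
    calc en (z s) ≤ en v + en (G s *ᵥ q) := en_sub_le v (G s *ᵥ q)
      _ ≤ en v + α₁ * en q := by linarith
      _ ≤ en v + α₁ * (en v / α₀) := by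
          have := mul_le_mul_of_nonneg_left hqv hα₁.le
          linarith
      _ = (1 + α₁ / α₀) * en v := by ring
  have hΦAb : ∀ s ∈ Icc t₀ t₁, ‖ΦA s t₀‖ ≤ Real.exp (lamA * (s - t₀)) :=
    flow_gronwall A ΦA hΦAderiv hΦAinit
      (fun t htm => hAb t ⟨htm.1, le_trans htm.2 ht1⟩)
  have hxb : ∀ s ∈ Icc t₀ t₁, en (xt s) ≤ Real.exp (lamA * (s - t₀)) * ((1 + α₁ / α₀) * en v) := by
    intro s hs
    calc en (xt s) ≤ ‖ΦA s t₀‖ * en (z s) := en_mulVec_le _ _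
      _ ≤ Real.exp (lamA * (s - t₀)) * ((1 + α₁ / α₀) * en v) := by
          apply mul_le_mul (hΦAb s hs) (hzb s hs) (en_nonneg _) (Real.exp_nonneg _)
  -- pointwise bound on Fx
  set C : ℝ := lamF ^ 2 * ((1 + α₁ / α₀) ^ 2 * V) with hCdef
  have hC0 : 0 ≤ C := by
    rw [hCdef]
    have h1 : (0:ℝ) ≤ (1 + α₁ / α₀) ^ 2 := sq_nonneg _
    positivity
  have hFxb : ∀ s ∈ Icc t₀ t₁,
      (F s *ᵥ xt s) ⬝ᵥ (F s *ᵥ xt s) ≤ C * Real.exp (2 * lamA * (s - t₀)) := by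
    intro s hs
    have h1 : en (F s *ᵥ xt s) ≤ lamF * (Real.exp (lamA * (s - t₀)) * ((1 + α₁ / α₀) * en v)) := by
      calc en (F s *ᵥ xt s) ≤ ‖F s‖ * en (xt s) := en_mulVec_le _ _
        _ ≤ lamF * (Real.exp (lamA * (s - t₀)) * ((1 + α₁ / α₀) * en v)) := by
            apply mul_le_mul (hFb s ⟨hs.1, le_trans hs.2 ht1⟩) (hxb s hs)
              (en_nonneg _) hlamF0
    have h2 : (F s *ᵥ xt s) ⬝ᵥ (F s *ᵥ xt s) = en (F s *ᵥ xt s) ^ 2 := (en_sq _).symm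
    have h3 : en (F s *ᵥ xt s) ^ 2
        ≤ (lamF * (Real.exp (lamA * (s - t₀)) * ((1 + α₁ / α₀) * en v))) ^ 2 :=
      pow_le_pow_left₀ (en_nonneg _) h1 2
    have h4 : (lamF * (Real.exp (lamA * (s - t₀)) * ((1 + α₁ / α₀) * en v))) ^ 2
        = C * Real.exp (2 * lamA * (s - t₀)) := by
      have hexp2 : Real.exp (lamA * (s - t₀)) ^ 2 = Real.exp (2 * lamA * (s - t₀)) := by
        rw [sq, ← Real.exp_add]
        ring_nf
      rw [hCdef, hVdef, ← en_sq v, mul_pow, mul_pow, mul_pow, hexp2]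
      ring
    linarith
  -- exponential integral
  have hexpint : (∫ s in t₀..t₁, Real.exp (2 * lamA * (s - t₀)))
      = (Real.exp (2 * lamA * (t₁ - t₀)) - 1) / (2 * lamA) := by
    have hder : ∀ s ∈ uIcc t₀ t₁, HasDerivAt
        (fun τ => Real.exp (2 * lamA * (τ - t₀)) / (2 * lamA))
        (Real.exp (2 * lamA * (s - t₀))) s := by
      intro s _
      have h1 : HasDerivAt (fun τ : ℝ => 2 * lamA * (τ - t₀)) (2 * lamA) s := by
        simpa using ((hasDerivAt_id s).sub_const t₀).const_mul (2 * lamA)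
      have h2 := (Real.hasDerivAt_exp (2 * lamA * (s - t₀))).comp s h1
      have h3 := h2.div_const (2 * lamA)
      refine h3.congr_deriv ?_
      rw [mul_div_cancel_right₀ _ (by positivity : (2 * lamA) ≠ 0)]
    rw [intervalIntegral.integral_eq_sub_of_hasDerivAt hder
      ((Real.continuous_exp.comp (by continuity)).intervalIntegrable _ _)]
    rw [sub_self, mul_zero, Real.exp_zero, sub_div]
  have hexpmono : (Real.exp (2 * lamA * (t₁ - t₀)) - 1) / (2 * lamA)
      ≤ (Real.exp (2 * lamA * σ) - 1) / (2 * lamA) := by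
    have h2 : 2 * lamA * (t₁ - t₀) ≤ 2 * lamA * σ := by nlinarith
    rw [div_le_div_iff₀ (by positivity) (by positivity)]
    nlinarith [Real.exp_le_exp.2 h2]
  -- integral of Fx
  have hIpp : IntervalIntegrable (fun s => p s ⬝ᵥ p s) MeasureTheory.volume t₀ t₁ :=
    (hpc.dotProduct hpc).intervalIntegrable _ _
  have hIFx : IntervalIntegrable (fun s => (F s *ᵥ xt s) ⬝ᵥ (F s *ᵥ xt s))
      MeasureTheory.volume t₀ t₁ :=
    ((hFc.matrix_mulVec hxc).dotProduct (hFc.matrix_mulVec hxc)).intervalIntegrable _ _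
  have hIexp : IntervalIntegrable (fun s => C * Real.exp (2 * lamA * (s - t₀)))
      MeasureTheory.volume t₀ t₁ :=
    (continuous_const.mul (Real.continuous_exp.comp (by continuity))).intervalIntegrable _ _
  have hFxI : (∫ s in t₀..t₁, (F s *ᵥ xt s) ⬝ᵥ (F s *ᵥ xt s))
      ≤ C * ((Real.exp (2 * lamA * σ) - 1) / (2 * lamA)) := by
    calc (∫ s in t₀..t₁, (F s *ᵥ xt s) ⬝ᵥ (F s *ᵥ xt s))
        ≤ ∫ s in t₀..t₁, C * Real.exp (2 * lamA * (s - t₀)) :=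
          intervalIntegral.integral_mono_on ht hIFx hIexp hFxb
      _ = C * ((Real.exp (2 * lamA * (t₁ - t₀)) - 1) / (2 * lamA)) := by
          rw [intervalIntegral.integral_const_mul, hexpint]
      _ ≤ C * ((Real.exp (2 * lamA * σ) - 1) / (2 * lamA)) :=
          mul_le_mul_of_nonneg_left hexpmono hC0
  -- energy bound
  have hEb : E ≤ D * V := by
    have hpt : ∀ s ∈ Icc t₀ t₁, u s ⬝ᵥ u s
        ≤ 2 * (p s ⬝ᵥ p s) + 2 * ((F s *ᵥ xt s) ⬝ᵥ (F s *ᵥ xt s)) := by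
      intro s _
      have h1 : u s ⬝ᵥ u s = (p s + F s *ᵥ xt s) ⬝ᵥ (p s + F s *ᵥ xt s) := by
        have h0 : u s = -(p s + F s *ᵥ xt s) := by
          rw [hudef]; simp only; abel
        rw [h0, neg_dotProduct, dotProduct_neg, neg_neg]
      set a := p s
      set b := F s *ᵥ xt s
      have h2 : (a + b) ⬝ᵥ (a + b) + (a - b) ⬝ᵥ (a - b) = 2 * (a ⬝ᵥ a) + 2 * (b ⬝ᵥ b) := by
        simp only [dotProduct_add, add_dotProduct, dotProduct_sub, sub_dotProduct]
        ring
      have h3 := dot_self_nonneg' (a - b)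
      linarith
    have hmain : E ≤ ∫ s in t₀..t₁,
        (2 * (p s ⬝ᵥ p s) + 2 * ((F s *ᵥ xt s) ⬝ᵥ (F s *ᵥ xt s))) := by
      rw [hEdef]
      exact intervalIntegral.integral_mono_on ht hIuu
        ((hIpp.const_mul 2).add (hIFx.const_mul 2)) hpt
    have hsplit : (∫ s in t₀..t₁,
        (2 * (p s ⬝ᵥ p s) + 2 * ((F s *ᵥ xt s) ⬝ᵥ (F s *ᵥ xt s))))
        = 2 * (∫ s in t₀..t₁, p s ⬝ᵥ p s)
          + 2 * (∫ s in t₀..t₁, (F s *ᵥ xt s) ⬝ᵥ (F s *ᵥ xt s)) := by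
      rw [← intervalIntegral.integral_const_mul, ← intervalIntegral.integral_const_mul,
        ← intervalIntegral.integral_add (hIpp.const_mul 2) (hIFx.const_mul 2)]
    have halg : 2 * (V / α₀) + 2 * (C * ((Real.exp (2 * lamA * σ) - 1) / (2 * lamA)))
        = D * V := by
      rw [hCdef, hDdef]
      field_simp
    have h4 : 2 * (∫ s in t₀..t₁, p s ⬝ᵥ p s) ≤ 2 * (V / α₀) :=
      mul_le_mul_of_nonneg_left hppI (by norm_num)
    have h5 : 2 * (∫ s in t₀..t₁, (F s *ᵥ xt s) ⬝ᵥ (F s *ᵥ xt s))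
        ≤ 2 * (C * ((Real.exp (2 * lamA * σ) - 1) / (2 * lamA))) :=
      mul_le_mul_of_nonneg_left hFxI (by norm_num)
    calc E ≤ ∫ s in t₀..t₁,
          (2 * (p s ⬝ᵥ p s) + 2 * ((F s *ᵥ xt s) ⬝ᵥ (F s *ᵥ xt s))) := hmain
      _ = 2 * (∫ s in t₀..t₁, p s ⬝ᵥ p s)
          + 2 * (∫ s in t₀..t₁, (F s *ᵥ xt s) ⬝ᵥ (F s *ᵥ xt s)) := hsplit
      _ ≤ 2 * (V / α₀) + 2 * (C * ((Real.exp (2 * lamA * σ) - 1) / (2 * lamA))) :=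
          add_le_add h4 h5
      _ = D * V := halg
  -- conclude
  have h1 : V ≤ Q * D := by
    have ha : Q * E ≤ Q * (D * V) := mul_le_mul_of_nonneg_left hEb hQ0
    have hb : V * V ≤ (Q * D) * V := by
      calc V * V = V ^ 2 := (sq V).symm
        _ ≤ Q * E := hVQE
        _ ≤ Q * (D * V) := ha
        _ = (Q * D) * V := by ring
    exact le_of_mul_le_mul_right hb hV
  have h2 : D⁻¹ * V ≤ D⁻¹ * (Q * D) := mul_le_mul_of_nonneg_left h1 (by positivity)
  have h3 : D⁻¹ * (Q * D) = Q := by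
    rw [mul_comm Q D, ← mul_assoc, inv_mul_cancel₀ hD0.ne', one_mul]
  exact le_trans h2 (le_of_eq h3)
end
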